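/- Consider the eco-epidemiological system with nonnegative solution (S, I, P). Suppose δ > 0 and that for all t ≥ T we have a^u S(t) + r I(t) + P(t) ≤ Θ^u + δ. Then for all t ≥ T, S'(t) ≥ ξ_δ - ζ_δ S(t), where ξ_δ = Λ^ℓ - f((Θ^u+δ)/a^u, 0, 0)·(Θ^u+δ) and ζ_δ = μ + β (Θ^u+δ)/r. Consequently liminf_{t→∞} S(t) ≥ ξ_δ/ζ_δ; in particular if ξ_δ > 0 susceptible prey persist. -/

import Mathlib

open Real Filter

set_option maxHeartbeats 1000000

theorem stmt10 (μ β r c γ δ₁ δ₂ η Λℓ Λu t₀ T δ : ℝ)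
    (l : ℝ → ℝ) (f g : ℝ → ℝ → ℝ → ℝ) (S I P : ℝ → ℝ)
    (hμ : 0 < μ) (hβ : 0 < β) (hr : 0 < r) (hc : 0 < c) (hγ : 0 < γ)
    (hδ₁ : 0 < δ₁) (hδ₂ : 0 < δ₂) (hη : 0 < η) (hδ : 0 < δ) (ht₀T : t₀ ≤ T)
    (hΛℓ : 0 < Λℓ) (hΛ : Λℓ ≤ Λu)
    (hl : Continuous l) (hlb : ∀ t, Λℓ ≤ l t ∧ l t ≤ Λu)
    (hf_nonneg : ∀ x y z, 0 ≤ x → 0 ≤ y → 0 ≤ z → 0 ≤ f x y z)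
    (hg_nonneg : ∀ x y z, 0 ≤ x → 0 ≤ y → 0 ≤ z → 0 ≤ g x y z)
    (hfS : ∀ y z, MonotoneOn (fun x => f x y z) (Set.Ici 0))
    (hfI : ∀ x z, AntitoneOn (fun y => f x y z) (Set.Ici 0))
    (hfP : ∀ x y, AntitoneOn (fun z => f x y z) (Set.Ici 0))
    (hpos : ∀ t, t₀ ≤ t → 0 ≤ S t ∧ 0 ≤ I t ∧ 0 ≤ P t)
    (hS : ∀ t, t₀ ≤ t → HasDerivAt S
      (l t - μ * S t - f (S t) (I t) (P t) * P t - β * S t * I t) t)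
    (hI : ∀ t, t₀ ≤ t → HasDerivAt I
      (β * S t * I t - η * g (S t) (I t) (P t) * I t - c * I t) t)
    (hP : ∀ t, t₀ ≤ t → HasDerivAt P
      (γ * f (S t) (I t) (P t) * P t + r * η * g (S t) (I t) (P t) * I t
        - δ₁ * P t - δ₂ * (P t) ^ 2) t)
    (hbound : ∀ t, T ≤ t →
      max γ r * S t + r * I t + P t ≤ max γ r * Λu / min μ δ₁ + δ) :
    (∀ t, T ≤ t →
      (Λℓ - f ((max γ r * Λu / min μ δ₁ + δ) / max γ r) 0 0 *
          (max γ r * Λu / min μ δ₁ + δ)) -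
        (μ + β * ((max γ r * Λu / min μ δ₁ + δ) / r)) * S t ≤
      l t - μ * S t - f (S t) (I t) (P t) * P t - β * S t * I t) ∧
    (Λℓ - f ((max γ r * Λu / min μ δ₁ + δ) / max γ r) 0 0 *
        (max γ r * Λu / min μ δ₁ + δ)) /
      (μ + β * ((max γ r * Λu / min μ δ₁ + δ) / r)) ≤
      liminf S atTop := by
  have hA : (0:ℝ) < max γ r := lt_of_lt_of_le hγ (le_max_left _ _)
  set A := max γ r with hAdef
  set Θ := A * Λu / min μ δ₁ + δ with hΘdef
  have hmin : (0:ℝ) < min μ δ₁ := lt_min hμ hδ₁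
  have hΘ : 0 < Θ := by
    have h0 : 0 ≤ A * Λu / min μ δ₁ :=
      div_nonneg (mul_nonneg hA.le (by linarith)) hmin.le
    rw [hΘdef]; linarith
  set ξ := Λℓ - f (Θ / A) 0 0 * Θ with hξdef
  set ζ := μ + β * (Θ / r) with hζdef
  have hζ : 0 < ζ := by
    have h0 : 0 < β * (Θ / r) := mul_pos hβ (div_pos hΘ hr)
    rw [hζdef]; linarith
  have hΘA : (0:ℝ) ≤ Θ / A := div_nonneg hΘ.le hA.le
  have hfmax : 0 ≤ f (Θ / A) 0 0 := hf_nonneg _ _ _ hΘA le_rfl le_rfl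
  clear_value ζ ξ Θ A
  have part1 : ∀ t, T ≤ t → ξ - ζ * S t ≤
      l t - μ * S t - f (S t) (I t) (P t) * P t - β * S t * I t := by
    intro t ht
    have ht0 : t₀ ≤ t := le_trans ht₀T ht
    obtain ⟨hSt, hIt, hPt⟩ := hpos t ht0
    have hb := hbound t ht
    have hrI : 0 ≤ r * I t := mul_nonneg hr.le hIt
    have hAS : 0 ≤ A * S t := mul_nonneg hA.le hSt
    have hSle : S t ≤ Θ / A := by
      rw [le_div_iff₀ hA]; nlinarith
    have hIle : I t ≤ Θ / r := by
      rw [le_div_iff₀ hr]; nlinarith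
    have hPle : P t ≤ Θ := by nlinarith
    have hf1 : f (S t) (I t) (P t) ≤ f (S t) 0 (P t) :=
      hfI (S t) (P t) (Set.mem_Ici.2 le_rfl) (Set.mem_Ici.2 hIt) hIt
    have hf2 : f (S t) 0 (P t) ≤ f (S t) 0 0 :=
      hfP (S t) 0 (Set.mem_Ici.2 le_rfl) (Set.mem_Ici.2 hPt) hPt
    have hf3 : f (S t) 0 0 ≤ f (Θ / A) 0 0 :=
      hfS 0 0 (Set.mem_Ici.2 hSt) (Set.mem_Ici.2 hΘA) hSle
    have hfle : f (S t) (I t) (P t) ≤ f (Θ / A) 0 0 := le_trans hf1 (le_trans hf2 hf3)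
    have hfP_le : f (S t) (I t) (P t) * P t ≤ f (Θ / A) 0 0 * Θ :=
      mul_le_mul hfle hPle hPt hfmax
    have hβS : 0 ≤ β * S t := mul_nonneg hβ.le hSt
    have hβ_le : β * S t * I t ≤ β * (Θ / r) * S t := by
      have := mul_le_mul_of_nonneg_left hIle hβS
      nlinarith
    have hlt := (hlb t).1
    have hexp : ζ * S t = μ * S t + β * (Θ / r) * S t := by rw [hζdef]; ring
    have : ξ = Λℓ - f (Θ / A) 0 0 * Θ := hξdef
    linarith
  -- lower bound by comparison solution
  have hF : ∀ t, t₀ ≤ t → HasDerivAt (fun s => (S s - ξ / ζ) * Real.exp (ζ * s))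
      ((l t - μ * S t - f (S t) (I t) (P t) * P t - β * S t * I t) * Real.exp (ζ * t)
        + (S t - ξ / ζ) * (Real.exp (ζ * t) * ζ)) t := by
    intro t ht
    have h1 : HasDerivAt (fun s : ℝ => ζ * s) (ζ * 1) t := (hasDerivAt_id t).const_mul ζ
    have h2 : HasDerivAt (fun s : ℝ => Real.exp (ζ * s)) (Real.exp (ζ * t) * (ζ * 1)) t :=
      h1.exp
    have h3 : HasDerivAt (fun s => (S s - ξ / ζ) * Real.exp (ζ * s))
        ((l t - μ * S t - f (S t) (I t) (P t) * P t - β * S t * I t) * Real.exp (ζ * t)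
          + (S t - ξ / ζ) * (Real.exp (ζ * t) * (ζ * 1))) t :=
      ((hS t ht).sub_const (ξ / ζ)).mul h2
    convert h3 using 1
    ring
  have hmono : MonotoneOn (fun s => (S s - ξ / ζ) * Real.exp (ζ * s)) (Set.Ici T) := by
    apply monotoneOn_of_deriv_nonneg (convex_Ici T)
    · intro t ht
      exact (hF t (le_trans ht₀T ht)).continuousAt.continuousWithinAt
    · intro t ht
      rw [interior_Ici] at ht
      exact (hF t (le_trans ht₀T (le_of_lt ht))).differentiableAt.differentiableWithinAt
    · intro t ht
      rw [interior_Ici] at ht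
      rw [(hF t (le_trans ht₀T (le_of_lt ht))).deriv]
      have h1 := part1 t (le_of_lt ht)
      have h2 : (0:ℝ) < Real.exp (ζ * t) := Real.exp_pos _
      have h3 : ζ * (ξ / ζ) = ξ := mul_div_cancel₀ _ (ne_of_gt hζ)
      have key : (l t - μ * S t - f (S t) (I t) (P t) * P t - β * S t * I t) * Real.exp (ζ * t)
          + (S t - ξ / ζ) * (Real.exp (ζ * t) * ζ)
          = ((l t - μ * S t - f (S t) (I t) (P t) * P t - β * S t * I t) - (ξ - ζ * S t))
              * Real.exp (ζ * t) := by
        have : (S t - ξ / ζ) * (Real.exp (ζ * t) * ζ)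
            = (ζ * S t - ζ * (ξ / ζ)) * Real.exp (ζ * t) := by ring
        rw [this, h3]; ring
      rw [key]
      exact mul_nonneg (by linarith) h2.le
  have hlow : ∀ t, T ≤ t → ξ / ζ + (S T - ξ / ζ) * Real.exp (ζ * (T - t)) ≤ S t := by
    intro t ht
    have hm := hmono (Set.self_mem_Ici) (Set.mem_Ici.2 ht) ht
    simp only at hm
    have he : Real.exp (ζ * T) = Real.exp (ζ * (T - t)) * Real.exp (ζ * t) := by
      rw [← Real.exp_add]; ring_nf
    rw [he, ← mul_assoc] at hm
    have h2 : (0:ℝ) < Real.exp (ζ * t) := Real.exp_pos _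
    have := (mul_le_mul_iff_of_pos_right h2).mp hm
    nlinarith
  have htend : Tendsto (fun t => ξ / ζ + (S T - ξ / ζ) * Real.exp (ζ * (T - t))) atTop
      (nhds (ξ / ζ)) := by
    have h0 : Tendsto (fun t : ℝ => ζ * t) atTop atTop :=
      Tendsto.const_mul_atTop hζ tendsto_id
    have h1 : Tendsto (fun t : ℝ => ζ * (T - t)) atTop atBot :=
      (tendsto_atBot_add_const_left _ (ζ * T) (tendsto_neg_atTop_atBot.comp h0)).congr
        (fun t => by simp; ring)
    have h2 : Tendsto (fun t : ℝ => Real.exp (ζ * (T - t))) atTop (nhds 0) :=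
      Real.tendsto_exp_atBot.comp h1
    have h3 := (h2.const_mul (S T - ξ / ζ)).const_add (ξ / ζ)
    simpa using h3
  refine ⟨part1, ?_⟩
  have hev : (fun t => ξ / ζ + (S T - ξ / ζ) * Real.exp (ζ * (T - t))) ≤ᶠ[atTop] S :=
    eventually_atTop.2 ⟨T, hlow⟩
  have hbd : IsBoundedUnder (· ≥ ·) atTop
      (fun t => ξ / ζ + (S T - ξ / ζ) * Real.exp (ζ * (T - t))) :=
    htend.isBoundedUnder_ge
  have hub : IsBoundedUnder (· ≤ ·) atTop S := by
    refine ⟨Θ / A, eventually_map.2 (eventually_atTop.2 ⟨T, fun t ht => ?_⟩)⟩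
    obtain ⟨hSt, hIt, hPt⟩ := hpos t (le_trans ht₀T ht)
    have hb := hbound t ht
    rw [le_div_iff₀ hA]
    have hrI : 0 ≤ r * I t := mul_nonneg hr.le hIt
    nlinarith
  have hcb : IsCoboundedUnder (· ≥ ·) atTop S := hub.isCoboundedUnder_ge
  calc ξ / ζ = liminf (fun t => ξ / ζ + (S T - ξ / ζ) * Real.exp (ζ * (T - t))) atTop :=
        htend.liminf_eq.symm
    _ ≤ liminf S atTop := liminf_le_liminf hev hbd hcb
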